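/- Let M ∈ GL((F_{2^m})^b) be F_{2^m}-linear of order t, and let α : (F_2)^{mb} → (F_2)^{2^m b t} be defined by α(v) = (ε(v), ε(Mv), …, ε(M^{t−1}v)). Then the F_2-dimension of the span of the image of α is at most 2^m b t − (bt − 1) − mb(t − 1). -/

import Mathlib

open Finset Module

section Aux

variable {m b t : ℕ}

noncomputable def auxβ (m : ℕ) (hm : m ≠ 0) : Basis (Fin m) (ZMod 2) (GaloisField 2 m) :=
  (Module.finBasis (ZMod 2) (GaloisField 2 m)).reindex
    (finCongr (GaloisField.finrank 2 hm))

noncomputable def Phi (m b t : ℕ) (hm : m ≠ 0) (hb : b ≠ 0) (ht : t ≠ 0)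
    (ι : GaloisField 2 m ≃ Fin (2 ^ m))
    (M : (Fin b → GaloisField 2 m) ≃ₗ[GaloisField 2 m] (Fin b → GaloisField 2 m)) :
    (Fin t × Fin b × Fin (2 ^ m) → ZMod 2) →ₗ[ZMod 2]
      ({p : Fin t × Fin b // p ≠ (⟨0, Nat.pos_of_ne_zero ht⟩, ⟨0, Nat.pos_of_ne_zero hb⟩)}
          → ZMod 2) ×
      ({s : Fin t // s ≠ ⟨0, Nat.pos_of_ne_zero ht⟩} × Fin b × Fin m → ZMod 2) where
  toFun x :=
    (fun q => (∑ j, x (q.1.1, q.1.2, j))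
        - ∑ j, x (⟨0, Nat.pos_of_ne_zero ht⟩, ⟨0, Nat.pos_of_ne_zero hb⟩, j),
     fun r => (∑ j, (auxβ m hm).coord r.2.2 (ι.symm j) * x (r.1.1, r.2.1, j))
        - ∑ i', ∑ j,
            (auxβ m hm).coord r.2.2
              ((M ^ ((r.1.1 : Fin t) : ℕ)) (Pi.single i' (ι.symm j)) r.2.1)
              * x (⟨0, Nat.pos_of_ne_zero ht⟩, i', j))
  map_add' x y := by
    refine Prod.ext ?_ ?_ <;> funext r <;>
      simp [mul_add, Finset.sum_add_distrib] <;> ring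
  map_smul' c x := by
    refine Prod.ext ?_ ?_ <;> funext r <;>
      simp [Finset.mul_sum, smul_eq_mul, mul_sub, mul_left_comm]

end Aux

set_option maxHeartbeats 1600000 in
theorem stmt8 (m b t : ℕ) (hm : 1 ≤ m) (hb : 1 ≤ b) (ht : 1 ≤ t)
    (ι : GaloisField 2 m ≃ Fin (2 ^ m))
    (ε : (Fin b → GaloisField 2 m) → (Fin b × Fin (2 ^ m) → ZMod 2))
    (hε : ∀ v i j, ε v (i, j) = if j = ι (v i) then 1 else 0)
    (M : (Fin b → GaloisField 2 m) ≃ₗ[GaloisField 2 m] (Fin b → GaloisField 2 m))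
    (hM : orderOf M = t)
    (α : (Fin b → GaloisField 2 m) → (Fin t × Fin b × Fin (2 ^ m) → ZMod 2))
    (hα : ∀ v (s : Fin t) (i : Fin b) (j : Fin (2 ^ m)),
      α v (s, i, j) = ε ((M ^ (s : ℕ)) v) (i, j)) :
    Module.finrank (ZMod 2) (Submodule.span (ZMod 2) (Set.range α))
      ≤ 2 ^ m * b * t - (b * t - 1) - m * b * (t - 1) := by
  have hm' : m ≠ 0 := by omega
  have hb' : b ≠ 0 := by omega
  have ht' : t ≠ 0 := by omega
  set z0 : Fin t := ⟨0, Nat.pos_of_ne_zero ht'⟩ with hz0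
  set w0 : Fin b := ⟨0, Nat.pos_of_ne_zero hb'⟩ with hw0
  set β := auxβ m hm' with hβ
  set Φ := Phi m b t hm' hb' ht' ι M with hΦ
  -- α v explicit
  have hαv : ∀ v (s : Fin t) i j,
      α v (s, i, j) = if j = ι ((M ^ (s : ℕ)) v i) then 1 else 0 := by
    intro v s i j; rw [hα, hε]
  -- range α ⊆ ker Φ
  have hker : Set.range α ⊆ (LinearMap.ker Φ : Set _) := by
    rintro _ ⟨v, rfl⟩
    have hsum1 : ∀ (s : Fin t) (i : Fin b), ∑ j, α v (s, i, j) = 1 := by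
      intro s i
      simp only [hαv]
      rw [Finset.sum_ite_eq' Finset.univ (ι ((M ^ (s : ℕ)) v i)) (fun _ => (1 : ZMod 2))]
      simp
    have hsum2 : ∀ (s : Fin t) (i : Fin b) (k : Fin m),
        ∑ j, β.coord k (ι.symm j) * α v (s, i, j) = β.coord k ((M ^ (s : ℕ)) v i) := by
      intro s i k
      simp only [hαv, mul_ite, mul_one, mul_zero]
      rw [Finset.sum_ite_eq' Finset.univ]
      simp
    simp only [SetLike.mem_coe, LinearMap.mem_ker]
    refine Prod.ext (funext fun r => ?_) (funext fun r => ?_) <;>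
      simp only [hΦ, Phi, LinearMap.coe_mk, AddHom.coe_mk, Prod.fst_zero, Prod.snd_zero,
        Pi.zero_apply]
    · rw [hsum1, hsum1, sub_self]
    · rw [hsum2]
      have h2 : ∀ i' : Fin b, ∑ j, β.coord r.2.2 ((M ^ ((r.1.1 : Fin t) : ℕ))
          (Pi.single i' (ι.symm j)) r.2.1) * α v (z0, i', j)
          = β.coord r.2.2 ((M ^ ((r.1.1 : Fin t) : ℕ)) (Pi.single i' (v i')) r.2.1) := by
        intro i'
        simp only [hαv, mul_ite, mul_one, mul_zero]
        rw [Finset.sum_ite_eq' Finset.univ]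
        have hz : ((z0 : Fin t) : ℕ) = 0 := rfl
        simp [hz]
      simp only [← hz0, ← hβ, h2]
      have h3 : (M ^ ((r.1.1 : Fin t) : ℕ)) v = ∑ i' : Fin b,
          (M ^ ((r.1.1 : Fin t) : ℕ)) (Pi.single i' (v i')) := by
        rw [← map_sum, Finset.univ_sum_single]
      rw [h3, Finset.sum_apply, map_sum, sub_self]
  have hspan : Submodule.span (ZMod 2) (Set.range α) ≤ LinearMap.ker Φ :=
    Submodule.span_le.mpr hker
  -- Φ surjective
  have hsurj : Function.Surjective Φ := by
    rintro ⟨a, c⟩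
    classical
    set j0 : Fin (2 ^ m) := ι 0 with hj0
    have hc0 : ∀ k : Fin m, β.coord k (ι.symm j0) = 0 := by
      intro k; simp [hj0]
    set e : {s : Fin t // s ≠ z0} → Fin b → GaloisField 2 m :=
      fun s i => β.equivFun.symm (fun k => c (s, i, k)) with he
    have hcoord : ∀ (s' : {s : Fin t // s ≠ z0}) (i : Fin b) (k : Fin m),
        β.coord k (e s' i) = c (s', i, k) := by
      intro s' i k
      rw [he]
      rw [Basis.coord_apply, ← Basis.equivFun_apply, LinearEquiv.apply_symm_apply]
    set x : Fin t × Fin b × Fin (2 ^ m) → ZMod 2 := fun q =>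
      if hs : q.1 = z0 then
        (if hq : q.2.1 = w0 then 0 else
          if q.2.2 = j0 then a ⟨(q.1, q.2.1), by simp [hs, hq, Prod.ext_iff, ← hz0, ← hw0]⟩ else 0)
      else
        ((if q.2.2 = ι (e ⟨q.1, hs⟩ q.2.1) then 1 else 0)
          + (if q.2.2 = j0 then a ⟨(q.1, q.2.1), by simp [hs, Prod.ext_iff, ← hz0, ← hw0]⟩ + 1 else 0))
      with hxd
    have hx0 : ∀ j, x (z0, w0, j) = 0 := by
      intro j; rw [hxd]; simp
    have hx1 : ∀ (i : Fin b) (hi : i ≠ w0) (j), x (z0, i, j) =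
        if j = j0 then a ⟨(z0, i), by simp [hi, Prod.ext_iff, ← hz0, ← hw0]⟩ else 0 := by
      intro i hi j; rw [hxd]
      exact dif_pos rfl |>.trans (dif_neg hi)
    have hx2 : ∀ (s : Fin t) (hs : s ≠ z0) (i : Fin b) (j), x (s, i, j) =
        ((if j = ι (e ⟨s, hs⟩ i) then 1 else 0)
          + (if j = j0 then a ⟨(s, i), by simp [hs, Prod.ext_iff, ← hz0, ← hw0]⟩ + 1 else 0)) := by
      intro s hs i j; rw [hxd]
      exact dif_neg hs
    refine ⟨x, ?_⟩
    have hsum0 : ∑ j, x (z0, w0, j) = 0 := by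
      simp [hx0]
    refine Prod.ext (funext fun q => ?_) (funext fun r => ?_) <;>
      simp only [hΦ, Phi, LinearMap.coe_mk, AddHom.coe_mk, ← hz0, ← hw0, ← hβ]
    · obtain ⟨⟨s, i⟩, hq⟩ := q
      show (∑ j, x (s, i, j)) - ∑ j, x (z0, w0, j) = a ⟨(s, i), hq⟩
      rw [hsum0, sub_zero]
      by_cases hs : s = z0
      · subst hs
        have hi : i ≠ w0 := by
          intro hh; exact hq (by simp [hh, ← hz0, ← hw0])
        simp only [hx1 i hi]
        rw [Finset.sum_ite_eq' Finset.univ]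
        simp
      · simp only [hx2 s hs i]
        rw [Finset.sum_add_distrib, Finset.sum_ite_eq' Finset.univ,
          Finset.sum_ite_eq' Finset.univ]
        simp only [Finset.mem_univ, if_pos]
        have h2 : ∀ y : ZMod 2, 1 + (y + 1) = y := by decide
        exact h2 _
    · obtain ⟨⟨s, hs⟩, i, k⟩ := r
      show (∑ j, β.coord k (ι.symm j) * x (s, i, j))
          - (∑ i', ∑ j, β.coord k ((M ^ (s : ℕ)) (Pi.single i' (ι.symm j)) i)
              * x (z0, i', j)) = c (⟨s, hs⟩, i, k)
      have hsecond : ∀ i' : Fin b, ∑ j, β.coord k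
          ((M ^ (s : ℕ)) (Pi.single i' (ι.symm j)) i) * x (z0, i', j) = 0 := by
        intro i'
        refine Finset.sum_eq_zero fun j _ => ?_
        by_cases hi' : i' = w0
        · subst hi'; rw [hx0, mul_zero]
        · rw [hx1 i' hi']
          by_cases hj : j = j0
          · subst hj
            have : β.coord k ((M ^ (s : ℕ)) (Pi.single i' (ι.symm j0)) i) = 0 := by
              simp [hj0]
            rw [this, zero_mul]
          · rw [if_neg hj, mul_zero]
      simp only [hsecond, Finset.sum_const_zero, sub_zero]
      simp only [hx2 s hs i, mul_add, mul_ite, mul_one, mul_zero]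
      rw [Finset.sum_add_distrib, Finset.sum_ite_eq' Finset.univ,
        Finset.sum_ite_eq' Finset.univ]
      simp only [Finset.mem_univ, if_pos]
      rw [hc0, zero_mul, Equiv.symm_apply_apply, hcoord]
      exact add_zero _
  -- dimension count
  have hN : finrank (ZMod 2) (Fin t × Fin b × Fin (2 ^ m) → ZMod 2)
      = t * (b * 2 ^ m) := by
    rw [Module.finrank_fintype_fun_eq_card]
    simp
  have hrank := LinearMap.finrank_range_add_finrank_ker Φ
  have hrange : finrank (ZMod 2) (LinearMap.range Φ)
      = (t * b - 1) + (t - 1) * (b * m) := by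
    rw [LinearMap.range_eq_top.mpr hsurj, finrank_top, Module.finrank_prod,
      Module.finrank_fintype_fun_eq_card, Module.finrank_fintype_fun_eq_card]
    congr 1
    · rw [Fintype.card_subtype_compl]
      simp [Fintype.card_subtype_eq]
    · simp [Fintype.card_subtype_compl, Fintype.card_subtype_eq]
  have hle : finrank (ZMod 2) (Submodule.span (ZMod 2) (Set.range α))
      ≤ finrank (ZMod 2) (LinearMap.ker Φ) := Submodule.finrank_mono hspan
  have harith : 2 ^ m * b * t = t * (b * 2 ^ m) := by ring
  have harith2 : b * t = t * b := by ring
  have harith3 : m * b * (t - 1) = (t - 1) * (b * m) := by ring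
  omega
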